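/- Let 0 < ε ≤ 0.1, n ≥ 1 and T ≥ 1. Then the Kullback–Leibler divergence between the mixture of product distributions P_mix^T = (1/n)·Σ_{v=1}^n P_v^T and the product distribution P_0^T satisfies D_KL( P_mix^T ‖ P_0^T ) ≤ ( (1 + 4ε²)^T − 1 ) / n. -/

import Mathlib

open scoped BigOperators

/-- The sample space of a single round: an advice vector `a ∈ {0,1}ⁿ`
and a correct-arm indicator `c ∈ {0,1}`. -/
abbrev Omg (n : ℕ) := (Fin n → Bool) × Bool

/-- Under `P0`, the advice vector is uniform on `{0,1}ⁿ` and the correct-arm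
indicator is uniform on `{0,1}`, independently. -/
noncomputable def P0 (n : ℕ) : Omg n → ℝ := fun _ => (1 / 2 : ℝ) ^ (n + 1)

/-- Under `Pv n ε v`, the advice vector is uniform on `{0,1}ⁿ` and, conditionally on it,
the correct-arm indicator equals its `v`-th entry with probability `1/2 + ε`. -/
noncomputable def Pv (n : ℕ) (ε : ℝ) (v : Fin n) : Omg n → ℝ := fun w =>
  (1 / 2 : ℝ) ^ n * (if w.2 = w.1 v then 1 / 2 + ε else 1 / 2 - ε)

/-- `T`-fold product of a probability mass function on `Omg n`. -/
noncomputable def prodP {n : ℕ} (T : ℕ) (P : Omg n → ℝ) : (Fin T → Omg n) → ℝ :=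
  fun g => ∏ t, P (g t)

/-- The uniform mixture `P_mix^T = (1/n) Σ_v P_v^T`. -/
noncomputable def Pmix (n : ℕ) (ε : ℝ) (T : ℕ) : (Fin T → Omg n) → ℝ := fun g =>
  (1 / (n : ℝ)) * ∑ v : Fin n, prodP T (Pv n ε v) g

/-- Kullback–Leibler divergence between two probability mass functions on a finite type
(with the convention `0 · ln 0 = 0`, which holds definitionally here since
`Real.log 0 = 0` and `0 * x = 0`). -/
noncomputable def klDiv {α : Type*} [Fintype α] (P Q : α → ℝ) : ℝ :=
  ∑ g, P g * Real.log (P g / Q g)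

/- ### Auxiliary lemmas -/

lemma term_eq (n : ℕ) (ε : ℝ) (v v' : Fin n) (w : Omg n) :
    Pv n ε v w * Pv n ε v' w / P0 n w
      = 2 * ((1 : ℝ)/2) ^ n * ((if w.2 = w.1 v then 1/2 + ε else 1/2 - ε)
          * (if w.2 = w.1 v' then 1/2 + ε else 1/2 - ε)) := by
  unfold Pv P0
  have h2 : ((1 : ℝ)/2) ^ n ≠ 0 := by positivity
  rw [pow_succ]
  rw [div_eq_iff (by positivity : ((1:ℝ)/2)^n * (1/2) ≠ 0)]
  ring

lemma half_pow_mul_two_pow (n : ℕ) : ((1 : ℝ)/2) ^ n * 2 ^ n = 1 := by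
  rw [one_div, inv_pow, inv_mul_cancel₀ (by positivity)]

lemma J_diag (n : ℕ) (ε : ℝ) (v : Fin n) :
    ∑ w : Omg n, Pv n ε v w * Pv n ε v w / P0 n w = 1 + 4 * ε ^ 2 := by
  have hinner : ∀ a : Fin n → Bool, ∑ c : Bool,
      (2 * ((1 : ℝ)/2) ^ n * ((if c = a v then 1/2 + ε else 1/2 - ε)
        * (if c = a v then 1/2 + ε else 1/2 - ε)))
      = 2 * ((1 : ℝ)/2) ^ n * ((1/2 + ε)^2 + (1/2 - ε)^2) := by
    intro a
    rw [Fintype.sum_bool]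
    cases h : a v <;> simp [h] <;> ring
  calc ∑ w : Omg n, Pv n ε v w * Pv n ε v w / P0 n w
      = ∑ a : Fin n → Bool, ∑ c : Bool,
          (2 * ((1 : ℝ)/2) ^ n * ((if c = a v then 1/2 + ε else 1/2 - ε)
            * (if c = a v then 1/2 + ε else 1/2 - ε))) := by
        rw [Fintype.sum_prod_type]
        exact Finset.sum_congr rfl fun a _ => Finset.sum_congr rfl fun c _ => term_eq n ε v v (a, c)
    _ = ∑ _a : Fin n → Bool, (2 * ((1 : ℝ)/2) ^ n * ((1/2 + ε)^2 + (1/2 - ε)^2)) :=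
        Finset.sum_congr rfl fun a _ => hinner a
    _ = 2 ^ n * (2 * ((1 : ℝ)/2) ^ n * ((1/2 + ε)^2 + (1/2 - ε)^2)) := by
        rw [Finset.sum_const, Finset.card_univ]
        simp only [Fintype.card_fun, Fintype.card_bool, Fintype.card_fin, nsmul_eq_mul]
        push_cast
        ring
    _ = 1 + 4 * ε ^ 2 := by
        linear_combination (2 * ((1/2 + ε)^2 + (1/2 - ε)^2)) * half_pow_mul_two_pow n

lemma sum_flip {n : ℕ} (v v' : Fin n) (h : v ≠ v') (X Y : ℝ) :
    ∑ a : Fin n → Bool, (if a v = a v' then X else Y) = 2 ^ n * (X + Y) / 2 := by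
  classical
  set F : (Fin n → Bool) → ℝ := fun a => if a v = a v' then X else Y with hF
  set g : (Fin n → Bool) → (Fin n → Bool) := fun a => Function.update a v' (!(a v')) with hg
  have hinv : Function.Involutive g := by
    intro a; funext i
    by_cases hi : i = v'
    · subst hi; simp [g]
    · simp [g, Function.update_of_ne hi]
  have hsum : ∑ a, F (g a) = ∑ a, F a :=
    Fintype.sum_bijective g hinv.bijective _ _ (fun a => rfl)
  have key : ∀ a, F a + F (g a) = X + Y := by
    intro a
    have h1 : g a v = a v := Function.update_of_ne h _ _
    have h2 : g a v' = !(a v') := Function.update_self _ _ _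
    by_cases hc : a v = a v'
    · have hne : ¬ (g a v = g a v') := by rw [h1, h2, hc]; simp
      simp only [hF, if_pos hc, if_neg hne]
    · have heq : g a v = g a v' := by rw [h1, h2, Bool.eq_not_iff]; exact hc
      simp only [hF, if_neg hc, if_pos heq]; ring
  have hcard : (Finset.univ : Finset (Fin n → Bool)).card = 2 ^ n := by
    simp [Fintype.card_fun]
  have h2S : (∑ a, F a) + (∑ a, F a) = 2 ^ n * (X + Y) := by
    calc (∑ a, F a) + (∑ a, F a) = (∑ a, F a) + (∑ a, F (g a)) := by rw [hsum]
      _ = ∑ a, (F a + F (g a)) := (Finset.sum_add_distrib).symm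
      _ = ∑ _a : Fin n → Bool, (X + Y) := Finset.sum_congr rfl fun a _ => key a
      _ = 2 ^ n * (X + Y) := by rw [Finset.sum_const, hcard, nsmul_eq_mul]; push_cast; ring
  linarith

lemma J_off (n : ℕ) (ε : ℝ) (v v' : Fin n) (h : v ≠ v') :
    ∑ w : Omg n, Pv n ε v w * Pv n ε v' w / P0 n w = 1 := by
  classical
  have hinner : ∀ a : Fin n → Bool, ∑ c : Bool,
      (2 * ((1 : ℝ)/2) ^ n * ((if c = a v then 1/2 + ε else 1/2 - ε)
        * (if c = a v' then 1/2 + ε else 1/2 - ε)))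
      = if a v = a v' then 2 * ((1 : ℝ)/2) ^ n * ((1/2 + ε)^2 + (1/2 - ε)^2)
        else 2 * ((1 : ℝ)/2) ^ n * (2 * (1/2 + ε) * (1/2 - ε)) := by
    intro a
    rw [Fintype.sum_bool]
    cases h1 : a v <;> cases h2 : a v' <;> simp [h1, h2] <;> ring
  calc ∑ w : Omg n, Pv n ε v w * Pv n ε v' w / P0 n w
      = ∑ a : Fin n → Bool, ∑ c : Bool,
          (2 * ((1 : ℝ)/2) ^ n * ((if c = a v then 1/2 + ε else 1/2 - ε)
            * (if c = a v' then 1/2 + ε else 1/2 - ε))) := by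
        rw [Fintype.sum_prod_type]
        exact Finset.sum_congr rfl fun a _ => Finset.sum_congr rfl fun c _ => term_eq n ε v v' (a, c)
    _ = ∑ a : Fin n → Bool,
          (if a v = a v' then 2 * ((1 : ℝ)/2) ^ n * ((1/2 + ε)^2 + (1/2 - ε)^2)
            else 2 * ((1 : ℝ)/2) ^ n * (2 * (1/2 + ε) * (1/2 - ε))) :=
        Finset.sum_congr rfl fun a _ => hinner a
    _ = 2 ^ n * (2 * ((1 : ℝ)/2) ^ n * ((1/2 + ε)^2 + (1/2 - ε)^2)
          + 2 * ((1 : ℝ)/2) ^ n * (2 * (1/2 + ε) * (1/2 - ε))) / 2 := sum_flip v v' h _ _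
    _ = 1 := by
        linear_combination (((1/2 + ε)^2 + (1/2 - ε)^2) + 2 * (1/2 + ε) * (1/2 - ε))
          * half_pow_mul_two_pow n

lemma Pv_sum (n : ℕ) (ε : ℝ) (v : Fin n) : ∑ w : Omg n, Pv n ε v w = 1 := by
  have hinner : ∀ a : Fin n → Bool, ∑ c : Bool,
      (((1 : ℝ)/2) ^ n * (if c = a v then 1/2 + ε else 1/2 - ε)) = ((1 : ℝ)/2) ^ n := by
    intro a
    rw [Fintype.sum_bool]
    cases h : a v <;> simp [h] <;> ring
  calc ∑ w : Omg n, Pv n ε v w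
      = ∑ a : Fin n → Bool, ∑ c : Bool,
          (((1 : ℝ)/2) ^ n * (if c = a v then 1/2 + ε else 1/2 - ε)) := by
        rw [Fintype.sum_prod_type]
        exact Finset.sum_congr rfl fun a _ => Finset.sum_congr rfl fun c _ => rfl
    _ = ∑ _a : Fin n → Bool, ((1 : ℝ)/2) ^ n := Finset.sum_congr rfl fun a _ => hinner a
    _ = 2 ^ n * ((1 : ℝ)/2) ^ n := by
        rw [Finset.sum_const, Finset.card_univ]
        simp only [Fintype.card_fun, Fintype.card_bool, Fintype.card_fin, nsmul_eq_mul]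
        push_cast
        ring
    _ = 1 := by linear_combination half_pow_mul_two_pow n

lemma sum_prod_pow {α : Type*} [Fintype α] (T : ℕ) (f : α → ℝ) :
    ∑ g : Fin T → α, ∏ t, f (g t) = (∑ w, f w) ^ T :=
  (Fintype.sum_pow f T).symm

set_option maxHeartbeats 1000000 in
/-- `D_KL(P_mix^T ‖ P_0^T) ≤ ((1 + 4ε²)^T − 1) / n`. -/
theorem stmt4 (n T : ℕ) (ε : ℝ) (hε : 0 < ε) (hε' : ε ≤ 0.1) (hn : 1 ≤ n) (hT : 1 ≤ T) :
    klDiv (Pmix n ε T) (prodP T (P0 n)) ≤ ((1 + 4 * ε ^ 2) ^ T - 1) / (n : ℝ) := by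
  classical
  have hn0 : (n : ℝ) ≠ 0 := Nat.cast_ne_zero.mpr (by omega)
  set a : ℝ := 1 + 4 * ε ^ 2 with ha
  have hQpos : ∀ g : Fin T → Omg n, 0 < prodP T (P0 n) g := by
    intro g
    refine Finset.prod_pos fun t _ => ?_
    unfold P0
    positivity
  have hPv_nonneg : ∀ (v : Fin n) (w : Omg n), 0 ≤ Pv n ε v w := by
    intro v w
    unfold Pv
    apply mul_nonneg (by positivity)
    have : (0.1 : ℝ) ≤ 1/2 := by norm_num
    split <;> linarith
  have hPmix_nonneg : ∀ g, 0 ≤ Pmix n ε T g := by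
    intro g
    unfold Pmix
    apply mul_nonneg (by positivity)
    refine Finset.sum_nonneg fun v _ => ?_
    exact Finset.prod_nonneg fun t _ => hPv_nonneg v _
  have hprod_sum : ∀ v : Fin n, ∑ g : Fin T → Omg n, prodP T (Pv n ε v) g = 1 := by
    intro v
    unfold prodP
    rw [sum_prod_pow, Pv_sum, one_pow]
  have hPsum : ∑ g, Pmix n ε T g = 1 := by
    unfold Pmix
    rw [← Finset.mul_sum, Finset.sum_comm]
    rw [Finset.sum_congr rfl fun v (_ : v ∈ Finset.univ) => hprod_sum v]
    rw [Finset.sum_const, Finset.card_univ, Fintype.card_fin, nsmul_eq_mul, mul_one]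
    field_simp
  -- KL ≤ chi-square
  have hKL : klDiv (Pmix n ε T) (prodP T (P0 n))
      ≤ (∑ g, (Pmix n ε T g) ^ 2 / prodP T (P0 n) g) - 1 := by
    unfold klDiv
    have hpt : ∀ g : Fin T → Omg n,
        Pmix n ε T g * Real.log (Pmix n ε T g / prodP T (P0 n) g)
          ≤ (Pmix n ε T g) ^ 2 / prodP T (P0 n) g - Pmix n ε T g := by
      intro g
      rcases eq_or_lt_of_le (hPmix_nonneg g) with h0 | h0
      · rw [← h0]
        simp
      · have hx : 0 < Pmix n ε T g / prodP T (P0 n) g := div_pos h0 (hQpos g)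
        have hlog := Real.log_le_sub_one_of_pos hx
        have hmul := mul_le_mul_of_nonneg_left hlog (le_of_lt h0)
        have heq : Pmix n ε T g * (Pmix n ε T g / prodP T (P0 n) g - 1)
            = (Pmix n ε T g) ^ 2 / prodP T (P0 n) g - Pmix n ε T g := by
          rw [mul_sub, mul_one, mul_div_assoc', ← sq]
        linarith
    calc ∑ g, Pmix n ε T g * Real.log (Pmix n ε T g / prodP T (P0 n) g)
        ≤ ∑ g, ((Pmix n ε T g) ^ 2 / prodP T (P0 n) g - Pmix n ε T g) :=
          Finset.sum_le_sum fun g _ => hpt g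
      _ = (∑ g, (Pmix n ε T g) ^ 2 / prodP T (P0 n) g) - ∑ g, Pmix n ε T g :=
          Finset.sum_sub_distrib _ _
      _ = (∑ g, (Pmix n ε T g) ^ 2 / prodP T (P0 n) g) - 1 := by rw [hPsum]
  -- chi-square computation
  have hterm : ∀ g : Fin T → Omg n,
      (Pmix n ε T g) ^ 2 / prodP T (P0 n) g
        = (1/(n : ℝ)) ^ 2 * ∑ v : Fin n, ∑ v' : Fin n,
            ∏ t, (Pv n ε v (g t) * Pv n ε v' (g t) / P0 n (g t)) := by
    intro g
    unfold Pmix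
    rw [mul_pow, sq (∑ v : Fin n, prodP T (Pv n ε v) g), Finset.sum_mul_sum, mul_div_assoc]
    congr 1
    rw [Finset.sum_div]
    refine Finset.sum_congr rfl fun v _ => ?_
    rw [Finset.sum_div]
    refine Finset.sum_congr rfl fun v' _ => ?_
    unfold prodP
    rw [← Finset.prod_mul_distrib, ← Finset.prod_div_distrib]
  have hJ : ∀ v v' : Fin n,
      (∑ w : Omg n, Pv n ε v w * Pv n ε v' w / P0 n w) ^ T
        = (if v' = v then a ^ T - 1 else 0) + 1 := by
    intro v v'
    by_cases h : v' = v
    · subst h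
      rw [J_diag, if_pos rfl, ← ha]
      ring
    · rw [J_off n ε v v' (Ne.symm h), one_pow, if_neg h]
      ring
  have hchi : ∑ g, (Pmix n ε T g) ^ 2 / prodP T (P0 n) g = (a ^ T - 1 + n) / n := by
    calc ∑ g, (Pmix n ε T g) ^ 2 / prodP T (P0 n) g
        = ∑ g : Fin T → Omg n, (1/(n : ℝ)) ^ 2 * ∑ v : Fin n, ∑ v' : Fin n,
            ∏ t, (Pv n ε v (g t) * Pv n ε v' (g t) / P0 n (g t)) :=
          Finset.sum_congr rfl fun g _ => hterm g
      _ = (1/(n : ℝ)) ^ 2 * ∑ g : Fin T → Omg n, ∑ v : Fin n, ∑ v' : Fin n,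
            ∏ t, (Pv n ε v (g t) * Pv n ε v' (g t) / P0 n (g t)) := by
          rw [Finset.mul_sum]
      _ = (1/(n : ℝ)) ^ 2 * ∑ v : Fin n, ∑ g : Fin T → Omg n, ∑ v' : Fin n,
            ∏ t, (Pv n ε v (g t) * Pv n ε v' (g t) / P0 n (g t)) := by
          rw [Finset.sum_comm]
      _ = (1/(n : ℝ)) ^ 2 * ∑ v : Fin n, ∑ v' : Fin n, ∑ g : Fin T → Omg n,
            ∏ t, (Pv n ε v (g t) * Pv n ε v' (g t) / P0 n (g t)) := by
          congr 1
          exact Finset.sum_congr rfl fun v _ => Finset.sum_comm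
      _ = (1/(n : ℝ)) ^ 2 * ∑ v : Fin n, ∑ v' : Fin n,
            (∑ w : Omg n, Pv n ε v w * Pv n ε v' w / P0 n w) ^ T := by
          congr 1
          exact Finset.sum_congr rfl fun v _ => Finset.sum_congr rfl fun v' _ =>
            sum_prod_pow T (fun w => Pv n ε v w * Pv n ε v' w / P0 n w)
      _ = (1/(n : ℝ)) ^ 2 * ∑ v : Fin n, ((a ^ T - 1) + n) := by
          congr 1
          refine Finset.sum_congr rfl fun v _ => ?_
          rw [Finset.sum_congr rfl fun v' (_ : v' ∈ Finset.univ) => hJ v v']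
          rw [Finset.sum_add_distrib, Finset.sum_ite_eq' Finset.univ v fun _ => a ^ T - 1]
          rw [if_pos (Finset.mem_univ v), Finset.sum_const, Finset.card_univ,
            Fintype.card_fin, nsmul_eq_mul, mul_one]
      _ = (1/(n : ℝ)) ^ 2 * ((n : ℝ) * ((a ^ T - 1) + n)) := by
          rw [Finset.sum_const, Finset.card_univ, Fintype.card_fin, nsmul_eq_mul]
      _ = (a ^ T - 1 + n) / n := by
          field_simp
  have hfin : (a ^ T - 1 + n) / n - 1 = (a ^ T - 1) / n := by
    field_simp
    ring
  calc klDiv (Pmix n ε T) (prodP T (P0 n))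
      ≤ (∑ g, (Pmix n ε T g) ^ 2 / prodP T (P0 n) g) - 1 := hKL
    _ = (a ^ T - 1 + n) / n - 1 := by rw [hchi]
    _ = (a ^ T - 1) / n := hfin
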